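/- Let d ≥ 1 be an integer and a_0, …, a_d real numbers with a_i ≥ 0 for all i and not all a_i equal to zero. If z is a nonzero complex number with |arg z| < π/d (principal argument), then Σ_{i=0}^d a_i · z^i ≠ 0. -/

import Mathlib

/-- A nonzero polynomial of degree at most `d` with nonnegative coefficients in the
power basis has no zeros in the open sector `|arg z| < π/d`. -/
theorem stmt_8 (d : ℕ) (hd : 1 ≤ d) (a : Fin (d + 1) → ℝ)
    (ha : ∀ i, 0 ≤ a i) (hne : ∃ i, a i ≠ 0)
    (z : ℂ) (hz : z ≠ 0) (harg : |Complex.arg z| < Real.pi / d) :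
    ∑ i, (a i : ℂ) * z ^ (i : ℕ) ≠ 0 := by
  set θ : ℝ := Complex.arg z with hθ
  set r : ℝ := ‖z‖ with hrdef
  have hr : 0 < r := norm_pos_iff.mpr hz
  have hdpos : (0:ℝ) < d := by exact_mod_cast Nat.lt_of_lt_of_le Nat.zero_lt_one hd
  -- angle bound for each i
  have hcos : ∀ i : Fin (d+1), 0 < Real.cos ((i:ℕ) * θ - d * θ / 2) := by
    intro i
    apply Real.cos_pos_of_mem_Ioo
    have hile : ((i:ℕ):ℝ) ≤ d := by
      exact_mod_cast Nat.lt_succ_iff.mp i.isLt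
    have hiabs : |((i:ℕ):ℝ) - d / 2| ≤ d / 2 := by
      rw [abs_le]
      constructor <;> nlinarith [Nat.cast_nonneg (α := ℝ) (i:ℕ)]
    have : |(i:ℕ) * θ - d * θ / 2| < Real.pi / 2 := by
      have h1 : (i:ℕ) * θ - d * θ / 2 = (((i:ℕ):ℝ) - d / 2) * θ := by ring
      rw [h1, abs_mul]
      calc |((i:ℕ):ℝ) - d / 2| * |θ| ≤ (d / 2) * |θ| := by
              exact mul_le_mul_of_nonneg_right hiabs (abs_nonneg θ)
        _ < (d / 2) * (Real.pi / d) := by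
              exact mul_lt_mul_of_pos_left harg (by positivity)
        _ = Real.pi / 2 := by field_simp
    constructor
    · linarith [abs_lt.mp this |>.1]
    · linarith [abs_lt.mp this |>.2]
  have hzeq : z = (r : ℂ) * Complex.exp (θ * Complex.I) := (Complex.norm_mul_exp_arg_mul_I z).symm
  have key : 0 < (Complex.exp (-(d * θ / 2 : ℝ) * Complex.I) * ∑ i, (a i : ℂ) * z ^ (i : ℕ)).re := by
    rw [Finset.mul_sum]
    have hre : ∀ i : Fin (d+1),
        (Complex.exp (-(d * θ / 2 : ℝ) * Complex.I) * ((a i : ℂ) * z ^ (i:ℕ))).re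
        = a i * r ^ (i:ℕ) * Real.cos ((i:ℕ) * θ - d * θ / 2) := by
      intro i
      rw [hzeq, mul_pow, ← Complex.exp_nat_mul]
      have : Complex.exp (-(d * θ / 2 : ℝ) * Complex.I) *
          ((a i : ℂ) * ((r:ℂ) ^ (i:ℕ) * Complex.exp ((i:ℕ) * (θ * Complex.I))))
          = ((a i * r ^ (i:ℕ) : ℝ) : ℂ) * Complex.exp ((((i:ℕ) * θ - d * θ / 2 : ℝ)) * Complex.I) := by
        calc Complex.exp (-(d * θ / 2 : ℝ) * Complex.I) *
              ((a i : ℂ) * ((r:ℂ) ^ (i:ℕ) * Complex.exp ((i:ℕ) * (θ * Complex.I))))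
            = ((a i * r ^ (i:ℕ) : ℝ) : ℂ) *
              (Complex.exp (((i:ℕ):ℂ) * (θ * Complex.I)) * Complex.exp (-(d * θ / 2 : ℝ) * Complex.I)) := by
              push_cast; ring
          _ = ((a i * r ^ (i:ℕ) : ℝ) : ℂ) * Complex.exp ((((i:ℕ) * θ - d * θ / 2 : ℝ)) * Complex.I) := by
              rw [← Complex.exp_add]
              congr 1
              push_cast
              ring_nf
      rw [this, Complex.re_ofReal_mul, Complex.exp_ofReal_mul_I_re]
    rw [Complex.re_sum]
    · simp only [hre]
      obtain ⟨j, hj⟩ := hne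
      refine Finset.sum_pos' (fun i _ => ?_) ⟨j, Finset.mem_univ j, ?_⟩
      · have := hcos i
        have := ha i
        positivity
      · have haj : 0 < a j := lt_of_le_of_ne (ha j) (Ne.symm hj)
        have := hcos j
        positivity
  intro h
  rw [h, mul_zero] at key
  simp at key
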